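/- The usual stochastic order induces a lattice (meet-semilattice) structure on probability measures on ℝ: for any two probability measures μ, ν on ℝ with cumulative distribution functions F_μ and F_ν, there exists a probability measure η on ℝ whose cumulative distribution function is the pointwise maximum max(F_μ, F_ν); this η satisfies η ≤st μ and η ≤st ν, and every probability measure λ on ℝ with λ ≤st μ and λ ≤st ν satisfies λ ≤st η; that is, η is the greatest lower bound of μ and ν for the usual stochastic order. -/

import Mathlib

open MeasureTheory ProbabilityTheory Filter Topology

noncomputable def maxSF (μ ν : Measure ℝ) : StieltjesFunction ℝ where
  toFun := fun t => max (cdf μ t) (cdf ν t)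
  mono' := fun a b hab => max_le_max ((cdf μ).mono hab) ((cdf ν).mono hab)
  right_continuous' := fun x =>
    ((cdf μ).right_continuous x).max ((cdf ν).right_continuous x)

theorem stmt13 (μ ν : Measure ℝ) [IsProbabilityMeasure μ] [IsProbabilityMeasure ν] :
    ∃ η : Measure ℝ, IsProbabilityMeasure η ∧
      (∀ t : ℝ, η (Set.Iic t) = max (μ (Set.Iic t)) (ν (Set.Iic t))) ∧
      (∀ t : ℝ, μ (Set.Iic t) ≤ η (Set.Iic t)) ∧
      (∀ t : ℝ, ν (Set.Iic t) ≤ η (Set.Iic t)) ∧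
      ∀ lam : Measure ℝ, IsProbabilityMeasure lam →
        (∀ t : ℝ, μ (Set.Iic t) ≤ lam (Set.Iic t)) →
        (∀ t : ℝ, ν (Set.Iic t) ≤ lam (Set.Iic t)) →
        ∀ t : ℝ, η (Set.Iic t) ≤ lam (Set.Iic t) := by
  set f := maxSF μ ν
  have hbot : Tendsto f atBot (𝓝 0) := by
    have := (tendsto_cdf_atBot μ).max (tendsto_cdf_atBot ν)
    simp only [max_self] at this
    exact this
  have htop : Tendsto f atTop (𝓝 1) := by
    have := (tendsto_cdf_atTop μ).max (tendsto_cdf_atTop ν)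
    simp only [max_self] at this
    exact this
  have hIic : ∀ t : ℝ, f.measure (Set.Iic t) = max (μ (Set.Iic t)) (ν (Set.Iic t)) := by
    intro t
    rw [f.measure_Iic hbot, sub_zero]
    show ENNReal.ofReal (max (cdf μ t) (cdf ν t)) = _
    rcases le_total (cdf μ t) (cdf ν t) with h | h
    · rw [max_eq_right h, max_eq_right, ofReal_cdf]
      rw [← ofReal_cdf μ t, ← ofReal_cdf ν t]
      exact ENNReal.ofReal_le_ofReal h
    · rw [max_eq_left h, max_eq_left, ofReal_cdf]
      rw [← ofReal_cdf μ t, ← ofReal_cdf ν t]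
      exact ENNReal.ofReal_le_ofReal h
  refine ⟨f.measure, f.isProbabilityMeasure hbot htop, hIic, ?_, ?_, ?_⟩
  · intro t; rw [hIic t]; exact le_max_left _ _
  · intro t; rw [hIic t]; exact le_max_right _ _
  · intro lam _ h1 h2 t
    rw [hIic t]
    exact max_le (h1 t) (h2 t)
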